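/- Let U ⊆ ℝ^n × ℝ be open, let p ∈ ℕ ∪ {∞}, and let f : U → ℝ be a C^{p+1} function (with the convention ∞ + 1 = ∞) such that f(x,0) = 0 for every x with (x,0) ∈ U. Then there exists a unique continuous function g : U → ℝ such that f(x,y) = y·g(x,y) for all (x,y) ∈ U, and this g is C^p on U. -/

import Mathlib

open MeasureTheory Metric Set Filter Topology

set_option maxHeartbeats 1000000
set_option synthInstance.maxHeartbeats 400000

universe u

lemma contDiffAt_parametric_integral
    {E : Type u} [NormedAddCommGroup E] [NormedSpace ℝ E] [ProperSpace E] (k : ℕ) :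
    ∀ {F : Type u} [NormedAddCommGroup F] [NormedSpace ℝ F] [CompleteSpace F]
      {H : E × ℝ → F} {W : Set (E × ℝ)}, IsOpen W → ContDiffOn ℝ k H W →
      ∀ {z₀ : E}, (∀ t ∈ Icc (0:ℝ) 1, (z₀, t) ∈ W) →
      ContDiffAt ℝ k (fun z => ∫ t in (0:ℝ)..1, H (z, t)) z₀ := by
  induction k with
  | zero =>
    intro F _ _ _ H W hW hH z₀ hz₀
    -- tube
    have hK : IsCompact ((fun t => (z₀, t)) '' Icc (0:ℝ) 1) :=
      isCompact_Icc.image (by fun_prop)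
    obtain ⟨δ, δpos, hδ⟩ := hK.exists_thickening_subset_open hW
      (by rintro _ ⟨t, ht, rfl⟩; exact hz₀ t ht)
    have htube : closedBall z₀ (δ/2) ×ˢ Icc (0:ℝ) 1 ⊆ W := by
      rintro ⟨z, t⟩ ⟨hz, ht⟩
      apply hδ
      rw [Metric.mem_thickening_iff]
      refine ⟨(z₀, t), ⟨t, ht, rfl⟩, ?_⟩
      have : dist (z, t) (z₀, t) ≤ δ/2 := by
        rw [Prod.dist_eq]
        simp only [dist_self]
        exact max_le (mem_closedBall.1 hz) (by positivity)
      linarith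
    obtain ⟨M, hM⟩ := ((isCompact_closedBall z₀ (δ/2)).prod isCompact_Icc).exists_bound_of_continuousOn
      (hH.continuousOn.mono htube)
    have hmeas : ∀ z ∈ closedBall z₀ (δ/2),
        AEStronglyMeasurable (fun t => H (z, t)) (volume.restrict (Set.uIoc (0:ℝ) 1)) := by
      intro z hz
      rw [Set.uIoc_of_le zero_le_one]
      refine ContinuousOn.aestronglyMeasurable ?_ measurableSet_Ioc
      refine ((hH.continuousOn.mono htube).comp (by fun_prop : Continuous fun t : ℝ => (z, t)).continuousOn ?_).mono Ioc_subset_Icc_self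
      exact fun t ht => ⟨hz, ht⟩
    simp only [Nat.cast_zero]
    rw [contDiffAt_zero]
    refine ⟨ball z₀ (δ/2), ball_mem_nhds _ (by positivity), ?_⟩
    intro z hz
    refine (intervalIntegral.continuousAt_of_dominated_interval
      (bound := fun _ => M) ?_ ?_ intervalIntegrable_const ?_).continuousWithinAt
    · exact eventually_of_mem (isOpen_ball.mem_nhds hz)
        (fun x hx => hmeas x (ball_subset_closedBall hx))
    · refine eventually_of_mem (isOpen_ball.mem_nhds hz) (fun x hx => ae_of_all _ fun t ht => ?_)
      rw [Set.uIoc_of_le zero_le_one] at ht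
      exact hM (x, t) ⟨ball_subset_closedBall hx, Ioc_subset_Icc_self ht⟩
    · refine ae_of_all _ fun t ht => ?_
      rw [Set.uIoc_of_le zero_le_one] at ht
      have hmem : (z, t) ∈ W := htube ⟨ball_subset_closedBall hz, Ioc_subset_Icc_self ht⟩
      exact ContinuousAt.comp (x := z) (f := fun x : E => (x, t)) (g := H)
        ((hH.contDiffAt (hW.mem_nhds hmem)).continuousAt)
        ((Continuous.prodMk_left t).continuousAt)
  | succ k ih =>
    intro F _ _ _ H W hW hH z₀ hz₀
    have hK : IsCompact ((fun t => (z₀, t)) '' Icc (0:ℝ) 1) :=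
      isCompact_Icc.image (by fun_prop)
    obtain ⟨δ, δpos, hδ⟩ := hK.exists_thickening_subset_open hW
      (by rintro _ ⟨t, ht, rfl⟩; exact hz₀ t ht)
    have htube : closedBall z₀ (δ/2) ×ˢ Icc (0:ℝ) 1 ⊆ W := by
      rintro ⟨z, t⟩ ⟨hz, ht⟩
      apply hδ
      rw [Metric.mem_thickening_iff]
      refine ⟨(z₀, t), ⟨t, ht, rfl⟩, ?_⟩
      have : dist (z, t) (z₀, t) ≤ δ/2 := by
        rw [Prod.dist_eq]
        simp only [dist_self]
        exact max_le (mem_closedBall.1 hz) (by positivity)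
      linarith
    -- derivative in the parameter
    have hD : ContDiffOn ℝ k (fderiv ℝ H) W :=
      hH.fderiv_of_isOpen hW (by exact_mod_cast le_rfl)
    set H' : E × ℝ → (E →L[ℝ] F) :=
      fun w => (fderiv ℝ H w).comp (ContinuousLinearMap.inl ℝ E ℝ) with hH'def
    have hH' : ContDiffOn ℝ k H' W := by
      exact ((ContinuousLinearMap.compL ℝ E (E × ℝ) F).flip
        (ContinuousLinearMap.inl ℝ E ℝ)).contDiff.comp_contDiffOn hD
    obtain ⟨M, hM⟩ := ((isCompact_closedBall z₀ (δ/2)).prod isCompact_Icc).exists_bound_of_continuousOn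
      (hH'.continuousOn.mono htube)
    have hcontW : ContinuousOn H W := hH.continuousOn
    have hmeas : ∀ z ∈ closedBall z₀ (δ/2),
        AEStronglyMeasurable (fun t => H (z, t)) (volume.restrict (Set.uIoc (0:ℝ) 1)) := by
      intro z hz
      rw [Set.uIoc_of_le zero_le_one]
      refine ContinuousOn.aestronglyMeasurable ?_ measurableSet_Ioc
      refine ((hcontW.mono htube).comp (by fun_prop : Continuous fun t : ℝ => (z, t)).continuousOn ?_).mono Ioc_subset_Icc_self
      exact fun t ht => ⟨hz, ht⟩
    have hmeas' : ∀ z ∈ closedBall z₀ (δ/2),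
        AEStronglyMeasurable (fun t => H' (z, t)) (volume.restrict (Set.uIoc (0:ℝ) 1)) := by
      intro z hz
      rw [Set.uIoc_of_le zero_le_one]
      refine ContinuousOn.aestronglyMeasurable ?_ measurableSet_Ioc
      refine ((hH'.continuousOn.mono htube).comp (by fun_prop : Continuous fun t : ℝ => (z, t)).continuousOn ?_).mono Ioc_subset_Icc_self
      exact fun t ht => ⟨hz, ht⟩
    have key : ∀ z ∈ ball z₀ (δ/4), HasFDerivAt (fun z => ∫ t in (0:ℝ)..1, H (z, t))
        (∫ t in (0:ℝ)..1, H' (z, t)) z := by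
      intro z hz
      have hzc : z ∈ closedBall z₀ (δ/2) := by
        have := mem_ball.1 hz
        exact mem_closedBall.2 (by linarith)
      refine intervalIntegral.hasFDerivAt_integral_of_dominated_of_fderiv_le
        (𝕜 := ℝ) (μ := volume) (F := fun z t => H (z, t)) (F' := fun z t => H' (z, t))
        (x₀ := z) (a := 0) (b := 1)
        (s := ball z (δ/4)) (bound := fun _ => M) (ball_mem_nhds _ (by positivity)) ?_ ?_ (hmeas' z hzc) ?_
        intervalIntegrable_const ?_
      · refine eventually_of_mem (closedBall_mem_nhds_of_mem ?_) (fun x hx => hmeas x hx)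
        · exact mem_ball.2 (by have := mem_ball.1 hz; linarith)
      · -- interval integrability of H (z, ·)
        refine ContinuousOn.intervalIntegrable ?_
        rw [Set.uIcc_of_le zero_le_one]
        refine (hcontW.mono htube).comp (by fun_prop : Continuous fun t : ℝ => (z, t)).continuousOn ?_
        exact fun t ht => ⟨hzc, ht⟩
      · refine ae_of_all _ fun t ht x hx => ?_
        rw [Set.uIoc_of_le zero_le_one] at ht
        have hxc : x ∈ closedBall z₀ (δ/2) := by
          have h1 := mem_ball.1 hx
          have h2 := mem_ball.1 hz
          have := dist_triangle x z z₀
          exact mem_closedBall.2 (by linarith)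
        exact hM (x, t) ⟨hxc, Ioc_subset_Icc_self ht⟩
      · refine ae_of_all _ fun t ht x hx => ?_
        rw [Set.uIoc_of_le zero_le_one] at ht
        have hxc : x ∈ closedBall z₀ (δ/2) := by
          have h1 := mem_ball.1 hx
          have h2 := mem_ball.1 hz
          have := dist_triangle x z z₀
          exact mem_closedBall.2 (by linarith)
        have hmem : (x, t) ∈ W := htube ⟨hxc, Ioc_subset_Icc_self ht⟩
        have hdiff : HasFDerivAt H (fderiv ℝ H (x, t)) (x, t) :=
          ((hH.contDiffAt (hW.mem_nhds hmem)).differentiableAt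
            (by simp)).hasFDerivAt
        exact hdiff.comp x (hasFDerivAt_prodMk_left x t)
    have : ContDiffAt ℝ ((k : ℕ) + 1) (fun z => ∫ t in (0:ℝ)..1, H (z, t)) z₀ := by
      rw [contDiffAt_succ_iff_hasFDerivAt]
      exact ⟨fun z => ∫ t in (0:ℝ)..1, H' (z, t),
        ⟨ball z₀ (δ/4), ball_mem_nhds _ (by positivity), key⟩, ih hW hH' hz₀⟩
    exact_mod_cast this

lemma key_smooth {n : ℕ} (U : Set ((Fin n → ℝ) × ℝ)) (hU : IsOpen U) (k : ℕ)
    (f : (Fin n → ℝ) × ℝ → ℝ) (hf : ContDiffOn ℝ (k + 1 : ℕ) f U)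
    (h0 : ∀ x : Fin n → ℝ, (x, (0 : ℝ)) ∈ U → f (x, 0) = 0) :
    ContDiffOn ℝ k
      (fun q => if q.2 = 0 then fderiv ℝ f q ((0 : Fin n → ℝ), (1 : ℝ)) else f q / q.2) U := by
  set v : (Fin n → ℝ) × ℝ := ((0 : Fin n → ℝ), (1 : ℝ)) with hv
  set g : (Fin n → ℝ) × ℝ → ℝ := fun q => if q.2 = 0 then fderiv ℝ f q v else f q / q.2 with hg
  have hf1 : ∀ q ∈ U, DifferentiableAt ℝ f q := fun q hq =>
    (hf.contDiffAt (hU.mem_nhds hq)).differentiableAt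
      (by simp)
  have hD : ContDiffOn ℝ k (fderiv ℝ f) U :=
    hf.fderiv_of_isOpen hU (by exact_mod_cast le_rfl)
  have hD2 : ContDiffOn ℝ k (fun w => fderiv ℝ f w v) U :=
    (ContinuousLinearMap.apply ℝ ℝ v).contDiff.comp_contDiffOn hD
  intro q hq
  suffices h : ContDiffAt ℝ k g q from h.contDiffWithinAt
  by_cases hq2 : q.2 = 0
  · -- hard case: on the zero section
    obtain ⟨ε, εpos, hball⟩ := Metric.isOpen_iff.1 hU q hq
    have hq0 : ((q.1 : Fin n → ℝ), (0:ℝ)) = q := by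
      ext <;> simp [hq2.symm]
    -- points (x, t*y) stay in the ball
    have hmem : ∀ z ∈ ball q ε, ∀ t ∈ Icc (0:ℝ) 1, (z.1, t * z.2) ∈ ball q ε := by
      rintro ⟨x, y⟩ hz t ht
      rw [mem_ball, Prod.dist_eq] at hz ⊢
      refine lt_of_le_of_lt (max_le_max le_rfl ?_) hz
      rw [Real.dist_eq, Real.dist_eq, hq2, sub_zero, sub_zero, abs_mul]
      calc |t| * |y| ≤ 1 * |y| := by
            apply mul_le_mul_of_nonneg_right _ (abs_nonneg y)
            rw [abs_le]; constructor <;> [linarith [ht.1]; linarith [ht.2]]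
        _ = |y| := one_mul _
    set G : (Fin n → ℝ) × ℝ → ℝ := fun z => ∫ t in (0:ℝ)..1, fderiv ℝ f (z.1, t * z.2) v
      with hG
    -- the key factorization on the ball
    have hkey : ∀ z ∈ ball q ε, f z = z.2 * G z := by
      rintro ⟨x, y⟩ hz
      have hmem' : ∀ t ∈ Set.uIcc (0:ℝ) 1, (x, t * y) ∈ U := by
        intro t ht
        rw [Set.uIcc_of_le zero_le_one] at ht
        exact hball (hmem _ hz t ht)
      have hderiv : ∀ t ∈ Set.uIcc (0:ℝ) 1,
          HasDerivAt (fun t => f (x, t * y)) (fderiv ℝ f (x, t * y) ((0 : Fin n → ℝ), y)) t := by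
        intro t ht
        have hψ : HasDerivAt (fun t : ℝ => ((x : Fin n → ℝ), t * y)) ((0 : Fin n → ℝ), y) t := by
          refine (hasDerivAt_const t x).prodMk ?_
          simpa using (hasDerivAt_id t).mul_const y
        exact ((hf1 _ (hmem' t ht)).hasFDerivAt).comp_hasDerivAt t hψ
      have hint : IntervalIntegrable (fun t => fderiv ℝ f (x, t * y) ((0 : Fin n → ℝ), y))
          volume 0 1 := by
        apply ContinuousOn.intervalIntegrable
        have hc : ContinuousOn (fun t : ℝ => fderiv ℝ f (x, t * y)) (Set.uIcc (0:ℝ) 1) :=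
          hD.continuousOn.comp (by fun_prop) hmem'
        exact (ContinuousLinearMap.apply ℝ ℝ ((0 : Fin n → ℝ), y)).continuous.comp_continuousOn hc
      have hftc := intervalIntegral.integral_eq_sub_of_hasDerivAt hderiv hint
      have h00 : f ((x : Fin n → ℝ), (0:ℝ) * y) = 0 := by
        have hmem0 : ((x : Fin n → ℝ), (0:ℝ)) ∈ U := by
          have := hmem' 0 (by rw [Set.uIcc_of_le zero_le_one]; exact ⟨le_rfl, zero_le_one⟩)
          simpa using this
        rw [zero_mul]
        exact h0 x hmem0
      rw [h00, one_mul, sub_zero] at hftc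
      have hsmul : ∀ t : ℝ, fderiv ℝ f (x, t * y) ((0 : Fin n → ℝ), y)
          = y • fderiv ℝ f (x, t * y) v := by
        intro t
        rw [← ContinuousLinearMap.map_smul]
        congr 1
        rw [hv, Prod.smul_mk, smul_zero, smul_eq_mul, mul_one]
      rw [← hftc]
      simp only [hsmul]
      rw [intervalIntegral.integral_smul]
      simp [hG, smul_eq_mul]
    -- g agrees with G on the ball
    have heq : ∀ z ∈ ball q ε, g z = G z := by
      intro z hz
      by_cases hz2 : z.2 = 0
      · have hzz : ((z.1 : Fin n → ℝ), (0:ℝ)) = z := by ext <;> simp [hz2.symm]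
        simp only [hg, if_pos hz2, hG]
        have : ∀ t : ℝ, fderiv ℝ f (z.1, t * z.2) v = fderiv ℝ f z v := by
          intro t; rw [hz2, mul_zero, hzz]
        simp only [this]
        simp
      · have := hkey z hz
        simp only [hg, if_neg hz2]
        rw [this, mul_div_cancel_left₀ _ hz2]
    -- G is C^k at q, by the parametric integral lemma
    have hGsm : ContDiffAt ℝ k G q := by
      have hm : ContDiff ℝ k (fun w : ((Fin n → ℝ) × ℝ) × ℝ => ((w.1.1 : Fin n → ℝ), w.2 * w.1.2)) := by
        fun_prop
      have hWopen : IsOpen ((fun w : ((Fin n → ℝ) × ℝ) × ℝ => ((w.1.1 : Fin n → ℝ), w.2 * w.1.2)) ⁻¹' U) :=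
        hU.preimage hm.continuous
      have hH : ContDiffOn ℝ k
          (fun w : ((Fin n → ℝ) × ℝ) × ℝ => fderiv ℝ f ((w.1.1 : Fin n → ℝ), w.2 * w.1.2) v)
          ((fun w : ((Fin n → ℝ) × ℝ) × ℝ => ((w.1.1 : Fin n → ℝ), w.2 * w.1.2)) ⁻¹' U) :=
        hD2.comp hm.contDiffOn (Set.mapsTo_preimage _ _)
      have hz₀ : ∀ t ∈ Set.Icc (0:ℝ) 1,
          ((q : (Fin n → ℝ) × ℝ), t) ∈
            ((fun w : ((Fin n → ℝ) × ℝ) × ℝ => ((w.1.1 : Fin n → ℝ), w.2 * w.1.2)) ⁻¹' U) := by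
        intro t _
        simp only [Set.mem_preimage, hq2, mul_zero, hq0]
        exact hq
      exact contDiffAt_parametric_integral k hWopen hH hz₀
    exact hGsm.congr_of_eventuallyEq (eventuallyEq_of_mem (ball_mem_nhds q εpos) heq)
  · -- easy case: away from the zero section
    have hopen : IsOpen {w : (Fin n → ℝ) × ℝ | w.2 ≠ 0} :=
      isOpen_compl_singleton.preimage continuous_snd
    have hsm : ContDiffAt ℝ k (fun w : (Fin n → ℝ) × ℝ => f w / w.2) q := by
      refine ContDiffAt.div ?_ ?_ hq2
      · exact (hf.contDiffAt (hU.mem_nhds hq)).of_le (by exact_mod_cast Nat.le_succ k)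
      · exact contDiff_snd.contDiffAt
    exact hsm.congr_of_eventuallyEq
      (eventuallyEq_of_mem (hopen.mem_nhds hq2) (fun w hw => if_neg hw))


/-- **Division by a variable.**  Let `U ⊆ ℝⁿ × ℝ` be open, `p ∈ ℕ ∪ {∞}`, and let `f` be
`C^{p+1}` on `U` (with `∞ + 1 = ∞`) with `f(x,0) = 0` whenever `(x,0) ∈ U`.  Then there is
a unique continuous function `g` on `U` with `f(x,y) = y·g(x,y)` on `U`, and `g` is `C^p`
on `U`. -/
theorem stmt12 {n : ℕ} (U : Set ((Fin n → ℝ) × ℝ)) (hU : IsOpen U) (p : ℕ∞)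
    (f : (Fin n → ℝ) × ℝ → ℝ) (hf : ContDiffOn ℝ (p + 1) f U)
    (h0 : ∀ x : Fin n → ℝ, (x, (0 : ℝ)) ∈ U → f (x, 0) = 0) :
    ∃ g : (Fin n → ℝ) × ℝ → ℝ,
      ContinuousOn g U ∧
      (∀ q ∈ U, f q = q.2 * g q) ∧
      ContDiffOn ℝ p g U ∧
      ∀ g' : (Fin n → ℝ) × ℝ → ℝ, ContinuousOn g' U → (∀ q ∈ U, f q = q.2 * g' q) →
        ∀ q ∈ U, g' q = g q := by
  set g : (Fin n → ℝ) × ℝ → ℝ :=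
    fun q => if q.2 = 0 then fderiv ℝ f q ((0 : Fin n → ℝ), (1 : ℝ)) else f q / q.2 with hgdef
  have hgsm : ContDiffOn ℝ p g U := by
    induction p using ENat.recTopCoe with
    | top =>
      refine contDiffOn_infty.2 fun k => key_smooth U hU k f (hf.of_le ?_) h0
      exact_mod_cast (le_top : ((k : ℕ∞) + 1) ≤ ⊤)
    | coe m =>
      have hf' : ContDiffOn ℝ (m + 1 : ℕ) f U := by exact_mod_cast hf
      have := key_smooth U hU m f hf' h0
      exact_mod_cast this
  have hfac : ∀ q ∈ U, f q = q.2 * g q := by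
    intro q hq
    by_cases h : q.2 = 0
    · have hq0 : ((q.1 : Fin n → ℝ), (0 : ℝ)) = q := by ext <;> simp [h.symm]
      rw [h, zero_mul, ← hq0]
      exact h0 q.1 (hq0 ▸ hq)
    · rw [hgdef]
      simp only [if_neg h]
      rw [mul_comm, div_mul_cancel₀ _ h]
  refine ⟨g, hgsm.continuousOn, hfac, hgsm, ?_⟩
  intro g' hc' hfac' q hq
  by_cases h : q.2 = 0
  · -- limit argument
    set S : Set ((Fin n → ℝ) × ℝ) := {w | w.2 ≠ 0} with hS
    have hq0 : ((q.1 : Fin n → ℝ), (0 : ℝ)) = q := by ext <;> simp [h.symm]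
    have hqS : q ∈ closure S := by
      have ht : Filter.Tendsto (fun m : ℕ => ((q.1 : Fin n → ℝ), (1 : ℝ)/(m + 1)))
          Filter.atTop (𝓝 q) := by
        rw [← hq0]
        exact Filter.Tendsto.prodMk_nhds tendsto_const_nhds
          tendsto_one_div_add_atTop_nhds_zero_nat
      refine mem_closure_of_tendsto ht (Filter.Eventually.of_forall fun m => ?_)
      show (1 : ℝ)/(m + 1) ≠ 0
      positivity
    haveI hne : (𝓝[S] q).NeBot := mem_closure_iff_nhdsWithin_neBot.1 hqS
    have hgc : ContinuousAt g q := (hgsm.continuousOn q hq).continuousAt (hU.mem_nhds hq)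
    have hgc' : ContinuousAt g' q := (hc' q hq).continuousAt (hU.mem_nhds hq)
    have t1 : Filter.Tendsto g' (𝓝[S] q) (𝓝 (g' q)) :=
      hgc'.tendsto.mono_left nhdsWithin_le_nhds
    have t2 : Filter.Tendsto g (𝓝[S] q) (𝓝 (g q)) :=
      hgc.tendsto.mono_left nhdsWithin_le_nhds
    have h_eq : ∀ᶠ w in 𝓝[S] q, g' w = g w := by
      filter_upwards [mem_nhdsWithin_of_mem_nhds (hU.mem_nhds hq), self_mem_nhdsWithin]
        with w hwU hwS
      have h1 := hfac w hwU
      have h2 := hfac' w hwU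
      exact mul_left_cancel₀ hwS (h2.symm.trans h1)
    exact tendsto_nhds_unique t1 (t2.congr' (h_eq.mono fun w hw => hw.symm))
  · have h1 := hfac q hq
    have h2 := hfac' q hq
    exact mul_left_cancel₀ h (h2.symm.trans h1)
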